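/- arXiv:2604.01744 — 2 statements merged into one kernel-verified Lean document; each statement's English description precedes it below -/
import Mathlib

section
/- Let s ∈ ℂ and A = (A_1,…,A_n) ∈ ℂⁿ, and set g(t,A) = Σ_{k=1}^{n} A_k t^{k−1}/(k−1)!. Suppose {f^{(k)}_{j,m}} and {f̃^{(k)}_{j,m}} are two formal solutions of the nilpotent system dy_j/dt = y_{j+1} + ε V_j(ε, e^{±it}, y) (with y_{n+1} := 0) such that (ii) their ε⁰ parts equal the unperturbed solution, i.e. f^{(0)}_{j,m} = f̃^{(0)}_{j,m} = δ_{m,0} · (d^{j−1}/dt^{j−1}) g(t,A), and (iii) their zero-mode coefficients agree at t = s, i.e. f^{(k)}_{j,0}(s) = f̃^{(k)}_{j,0}(s) for all k ≥ 0 and all 1 ≤ j ≤ n. Then the two formal solutions coincide: f^{(k)}_{j,m} = f̃^{(k)}_{j,m} for all k, j, m. -/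
noncomputable section

open Polynomial

/-- Finite `ℂ[t]`-linear combinations of Fourier modes `e^{i m t}` (`m : ℤ`):
the mode-`m` coefficient of `x` is the polynomial `x m`. -/
abbrev FourierPoly : Type := AddMonoidAlgebra (Polynomial ℂ) ℤ

/-- Formal power series in `ε` whose coefficients are finite Fourier sums with
polynomial-in-`t` coefficients. -/
abbrev FSeries : Type := PowerSeries FourierPoly

/-- The mode `e^{i t}`, as a unit of `FSeries` (inverse `e^{-i t}`). -/
def zUnit : FSeriesˣ where
  val := PowerSeries.C (AddMonoidAlgebra.single 1 1)
  inv := PowerSeries.C (AddMonoidAlgebra.single (-1) 1)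
  val_inv := by
    rw [← map_mul, AddMonoidAlgebra.single_mul_single]
    norm_num [AddMonoidAlgebra.one_def]
  inv_val := by
    rw [← map_mul, AddMonoidAlgebra.single_mul_single]
    norm_num [AddMonoidAlgebra.one_def]

/-- Evaluation of a Laurent polynomial in `z` (an element of `ℂ[z,z⁻¹] = AddMonoidAlgebra ℂ ℤ`)
at `z = e^{i t}`, landing in `FSeries`. -/
def zEval : AddMonoidAlgebra ℂ ℤ →+* FSeries :=
  AddMonoidAlgebra.liftNCRingHom
    ((PowerSeries.C).comp (AddMonoidAlgebra.singleZeroRingHom.comp (Polynomial.C : ℂ →+* Polynomial ℂ)))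
    ((Units.coeHom _).comp (zpowersHom _ zUnit))
    (fun _ _ => Commute.all _ _)

/-- Evaluation of `V ∈ ℂ[ε, z, z⁻¹, y₁, …, yₙ]` (encoded as a polynomial in the `y`-variables
with coefficients in `ℂ[z,z⁻¹][ε]`) at `z = e^{i t}`, `ε = ε` (the power series variable)
and given formal series values of the `y`-variables. -/
def VEval {n : ℕ} (V : MvPolynomial (Fin n) (Polynomial (AddMonoidAlgebra ℂ ℤ)))
    (y : Fin n → FSeries) : FSeries :=
  MvPolynomial.eval₂ (Polynomial.eval₂RingHom zEval PowerSeries.X) y V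

/-- The formal series `y_j(ε,t) = Σ_k ε^k Σ_m f^{(k)}_{j,m}(t) e^{i m t}` attached to a family
`f^{(k)}_{j,m}` of polynomials (with, for each `k` and `j`, finite support in `m`). -/
def famSeries {n : ℕ} (F : ℕ → Fin n → FourierPoly) (j : Fin n) : FSeries :=
  PowerSeries.mk fun k => F k j

/-- The `(j+1)`-st component of the family, with the convention `f^{(k)}_{n+1,m} := 0`. -/
def famNext {n : ℕ} (F : ℕ → Fin n → FourierPoly) (k : ℕ) (j : Fin n) : FourierPoly :=
  if h : (j : ℕ) + 1 < n then F k ⟨(j : ℕ) + 1, h⟩ else 0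

/-- `F` encodes a formal solution `y_j(ε,t) = Σ_k ε^k Σ_m f^{(k)}_{j,m}(t) e^{i m t}` of the
nilpotent system `dy_j/dt = y_{j+1} + ε V_j(ε, e^{± i t}, y)` (with `y_{n+1} := 0`):
order by order in `ε` and mode by mode in `e^{i m t}`,
`(d/dt) f^{(k)}_{j,m} + i m f^{(k)}_{j,m} = f^{(k)}_{j+1,m} + [ε V_j(ε, e^{± i t}, y(ε,t))]_{ε^k e^{i m t}}`.
(Finiteness of the support in `m` at each order is built into `FourierPoly`.) -/
def IsNilpotentFormalSolution {n : ℕ}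
    (V : Fin n → MvPolynomial (Fin n) (Polynomial (AddMonoidAlgebra ℂ ℤ)))
    (F : ℕ → Fin n → FourierPoly) : Prop :=
  ∀ (k : ℕ) (j : Fin n) (m : ℤ),
    derivative ((F k j).coeff m) + Polynomial.C (Complex.I * (m : ℂ)) * (F k j).coeff m
      = (famNext F k j).coeff m
        + (PowerSeries.coeff k (PowerSeries.X * VEval (V j) (famSeries F))).coeff m

/-- `g(t,A) = Σ_{k=1}^{n} A_k t^{k-1}/(k-1)!` (here `0`-indexed:
`g = Σ_{k : Fin n} A_k t^k / k!`). -/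
def gPoly {n : ℕ} (A : Fin n → ℂ) : Polynomial ℂ :=
  ∑ k : Fin n, Polynomial.C (A k * (1 / ((k : ℕ).factorial : ℂ))) * Polynomial.X ^ (k : ℕ)

lemma VEval_coeff_congr {n : ℕ} (V : MvPolynomial (Fin n) (Polynomial (AddMonoidAlgebra ℂ ℤ)))
    (y y' : Fin n → FSeries) (N : ℕ)
    (h : ∀ i (d : ℕ), d ≤ N → PowerSeries.coeff d (y i) = PowerSeries.coeff d (y' i)) :
    PowerSeries.coeff N (VEval V y) = PowerSeries.coeff N (VEval V y') := by
  set I : Ideal FSeries := Ideal.span {(PowerSeries.X : FSeries) ^ (N + 1)} with hI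
  have hy : ∀ i, Ideal.Quotient.mk I (y i) = Ideal.Quotient.mk I (y' i) := by
    intro i
    rw [Ideal.Quotient.eq, hI, Ideal.mem_span_singleton, PowerSeries.X_pow_dvd_iff]
    intro m hm
    rw [map_sub, h i m (Nat.lt_succ_iff.mp hm), sub_self]
  have hq : Ideal.Quotient.mk I (VEval V y) = Ideal.Quotient.mk I (VEval V y') := by
    unfold VEval
    rw [MvPolynomial.eval₂_comp_left (S₁ := FSeries) (S₂ := FSeries ⧸ I) (Ideal.Quotient.mk I),
      MvPolynomial.eval₂_comp_left (S₁ := FSeries) (S₂ := FSeries ⧸ I) (Ideal.Quotient.mk I)]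
    congr 1
    funext i
    exact hy i
  have hdvd : (PowerSeries.X : FSeries) ^ (N + 1) ∣ VEval V y - VEval V y' := by
    rw [← Ideal.mem_span_singleton, ← hI, ← Ideal.Quotient.eq_zero_iff_mem, map_sub, hq, sub_self]
  have h2 := (PowerSeries.X_pow_dvd_iff.mp hdvd) N (Nat.lt_succ_self N)
  rw [map_sub, sub_eq_zero] at h2
  exact h2

lemma ode_poly_zero (c : ℂ) (hc : c ≠ 0) (p : Polynomial ℂ)
    (h : derivative p + Polynomial.C c * p = 0) : p = 0 := by
  by_contra hp
  have hlead := congrArg (fun q => q.coeff p.natDegree) h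
  simp only [Polynomial.coeff_add, Polynomial.coeff_derivative,
    Polynomial.coeff_natDegree_succ_eq_zero, Polynomial.coeff_C_mul, Polynomial.coeff_zero,
    zero_mul, zero_add] at hlead
  rcases mul_eq_zero.mp hlead with h1 | h1
  · exact hc h1
  · exact hp (Polynomial.leadingCoeff_eq_zero.mp h1)

/-- uniqueness of the naive perturbative solution, nilpotent case:
two formal solutions of `dy_j/dt = y_{j+1} + ε V_j(ε,e^{±it},y)` whose `ε⁰` parts both equal
the unperturbed solution `δ_{m,0} d^{j-1}g/dt^{j-1}` and whose zero-mode coefficients agree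
at `t = s` coincide. -/
theorem nilpotent_uniqueness {n : ℕ} (hn : 0 < n)
    (V : Fin n → MvPolynomial (Fin n) (Polynomial (AddMonoidAlgebra ℂ ℤ)))
    (s : ℂ) (A : Fin n → ℂ)
    (F F' : ℕ → Fin n → FourierPoly)
    (hsol : IsNilpotentFormalSolution V F) (hsol' : IsNilpotentFormalSolution V F')
    (hinit : ∀ j : Fin n, F 0 j = AddMonoidAlgebra.single 0 (derivative^[(j : ℕ)] (gPoly A)))
    (hinit' : ∀ j : Fin n, F' 0 j = AddMonoidAlgebra.single 0 (derivative^[(j : ℕ)] (gPoly A)))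
    (hres : ∀ (k : ℕ) (j : Fin n), ((F k j).coeff 0).eval s = ((F' k j).coeff 0).eval s) :
    F = F' := by
  have main : ∀ k, F k = F' k := by
    intro k
    induction k using Nat.strong_induction_on with
    | _ k IH =>
      rcases k with _ | k'
      · funext j
        rw [hinit j, hinit' j]
      · set K := k' + 1 with hK
        have hG : ∀ jj : Fin n,
            PowerSeries.coeff K (PowerSeries.X * VEval (V jj) (famSeries F))
              = PowerSeries.coeff K (PowerSeries.X * VEval (V jj) (famSeries F')) := by
          intro jj
          rw [hK, PowerSeries.coeff_succ_X_mul, PowerSeries.coeff_succ_X_mul]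
          refine VEval_coeff_congr (V jj) _ _ k' ?_
          intro i d hd
          simp only [famSeries, PowerSeries.coeff_mk]
          rw [IH d (Nat.lt_succ_of_le hd)]
        have step : ∀ j : Fin n, famNext F K j = famNext F' K j → F K j = F' K j := by
          intro j hfam
          refine AddMonoidAlgebra.ext (Finsupp.ext fun m => ?_)
          have E := hsol K j m
          have E' := hsol' K j m
          rw [hG j, hfam] at E
          have heq : derivative ((F K j).coeff m - (F' K j).coeff m)
              + Polynomial.C (Complex.I * (m : ℂ)) * ((F K j).coeff m - (F' K j).coeff m) = 0 := by
            have hsub : (derivative ((F K j).coeff m) + Polynomial.C (Complex.I * (m : ℂ)) * (F K j).coeff m)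
                - (derivative ((F' K j).coeff m) + Polynomial.C (Complex.I * (m : ℂ)) * (F' K j).coeff m) = 0 := by
              rw [E, E', sub_self]
            calc derivative ((F K j).coeff m - (F' K j).coeff m)
                + Polynomial.C (Complex.I * (m : ℂ)) * ((F K j).coeff m - (F' K j).coeff m)
                = (derivative ((F K j).coeff m) + Polynomial.C (Complex.I * (m : ℂ)) * (F K j).coeff m)
                  - (derivative ((F' K j).coeff m) + Polynomial.C (Complex.I * (m : ℂ)) * (F' K j).coeff m) := by
                  rw [Polynomial.derivative_sub]; ring
              _ = 0 := hsub
          refine sub_eq_zero.mp ?_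
          by_cases hm : m = 0
          · subst hm
            have hd : derivative ((F K j).coeff 0 - (F' K j).coeff 0) = 0 := by
              simpa using heq
            have hC := Polynomial.eq_C_of_natDegree_eq_zero
              (Polynomial.natDegree_eq_zero_of_derivative_eq_zero hd)
            have heval : ((F K j).coeff 0 - (F' K j).coeff 0).eval s = 0 := by
              rw [Polynomial.eval_sub, hres K j, sub_self]
            rw [hC, Polynomial.eval_C] at heval
            rw [hC, heval, map_zero]
          · have hc : Complex.I * (m : ℂ) ≠ 0 :=
              mul_ne_zero Complex.I_ne_zero (by exact_mod_cast hm)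
            exact ode_poly_zero _ hc _ heq
        suffices H : ∀ r : ℕ, ∀ j : Fin n, n ≤ (j : ℕ) + 1 + r → F K j = F' K j by
          funext j
          exact H n j (by omega)
        intro r
        induction r with
        | zero =>
          intro j hj
          have hlt : ¬ ((j : ℕ) + 1 < n) := by omega
          refine step j ?_
          simp [famNext, hlt]
        | succ r IHr =>
          intro j hj
          by_cases hjn : (j : ℕ) + 1 < n
          · have hnext : F K ⟨(j : ℕ) + 1, hjn⟩ = F' K ⟨(j : ℕ) + 1, hjn⟩ := by
              refine IHr ⟨(j : ℕ) + 1, hjn⟩ ?_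
              simp only [Fin.val_mk]
              omega
            refine step j ?_
            simp [famNext, hjn, hnext]
          · refine step j ?_
            simp [famNext, hjn]
  funext k
  exact main k

end
end

section
/- Let {f_{m,k}} be a scalar formal solution of the N-th order equation Π_r (d/dt − i m_r)^{n_r} y = ε V(ε, e^{±it}, y, y′, …, y^{(N−1)}), and let s ∈ ℂ. Then the shifted family {g_{m,k}} defined by g_{m,k}(t) := f_{m,k}(t − s) (the exponentials e^{imt} are NOT shifted) is again a scalar formal solution of the same equation. -/
noncomputable section

open Polynomial

/-- The mode-by-mode derivative `d/dt` on finite Fourier sums: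
`p(t) e^{imt} ↦ (p'(t) + i m p(t)) e^{imt}`. -/
def modeDeriv (x : FourierPoly) : FourierPoly :=
  Finsupp.sum x.coeff fun m p =>
    AddMonoidAlgebra.single m (derivative p + Polynomial.C (Complex.I * (m : ℂ)) * p)

/-- The derivative `d/dt`, acting coefficientwise in `ε` on `FSeries`. -/
def seriesDeriv (y : FSeries) : FSeries :=
  PowerSeries.mk fun k => modeDeriv (PowerSeries.coeff k y)

/-- The operator `d/dt + c` on `ℂ[t]`. -/
def shiftedDeriv (c : ℂ) : Module.End ℂ (Polynomial ℂ) :=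
  (Polynomial.derivative : Polynomial ℂ →ₗ[ℂ] Polynomial ℂ) + c • 1

/-- The operator `Π_{r=1}^{d} (d/dt + i(m - m_r))^{n_r}` on `ℂ[t]`. -/
def opProd {d : ℕ} (mr : Fin d → ℤ) (nv : Fin d → ℕ) (m : ℤ) :
    Module.End ℂ (Polynomial ℂ) :=
  (List.ofFn fun r : Fin d => shiftedDeriv (Complex.I * ((m : ℂ) - (mr r : ℂ))) ^ nv r).prod

/-- `F` encodes a scalar formal solution `y(ε,t) = Σ_k ε^k Σ_m f_{m,k}(t) e^{imt}` of the
`N`-th order equation `Π_r (d/dt - i m_r)^{n_r} y = ε V(ε, e^{±it}, y, y', …, y^{(N-1)})`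
(`N = n_1 + ⋯ + n_d`): order by order in `ε` and mode by mode in `e^{imt}`,
`Π_r (d/dt + i(m - m_r))^{n_r} f_{m,k} = [ε V(ε, e^{±it}, y, y', …, y^{(N-1)})]_{ε^k e^{imt}}`.
(Finiteness of the support in `m` at each order is built into `FourierPoly`.) -/
def IsScalarFormalSolution {d : ℕ} (mr : Fin d → ℤ) (nv : Fin d → ℕ)
    (V : MvPolynomial (Fin (∑ r, nv r)) (Polynomial (AddMonoidAlgebra ℂ ℤ)))
    (F : ℕ → FourierPoly) : Prop :=
  ∀ (k : ℕ) (m : ℤ),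
    opProd mr nv m ((F k).coeff m)
      = (PowerSeries.coeff k (PowerSeries.X *
          VEval V (fun l => seriesDeriv^[(l : ℕ)] (PowerSeries.mk fun k' => F k')))).coeff m

set_option linter.dupNamespace false

namespace ScalarShiftAux

/-- Shift `t ↦ t - s` as a ring hom on `ℂ[t]`. -/
def T (s : ℂ) : Polynomial ℂ →+* Polynomial ℂ :=
  (Polynomial.aeval (Polynomial.X - Polynomial.C s)).toRingHom

lemma T_apply (s : ℂ) (p : Polynomial ℂ) :
    T s p = p.comp (Polynomial.X - Polynomial.C s) := rfl

/-- Shift as a ring hom on `FourierPoly`. -/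
def Φ (s : ℂ) : FourierPoly →+* FourierPoly :=
  AddMonoidAlgebra.liftNCRingHom
    (AddMonoidAlgebra.singleZeroRingHom.comp (T s))
    (AddMonoidAlgebra.of (Polynomial ℂ) ℤ)
    (fun _ _ => Commute.all _ _)

lemma Φ_single (s : ℂ) (m : ℤ) (p : Polynomial ℂ) :
    Φ s (AddMonoidAlgebra.single m p) = AddMonoidAlgebra.single m (T s p) := by
  have h := AddMonoidAlgebra.liftNC_single
    (((AddMonoidAlgebra.singleZeroRingHom :
        Polynomial ℂ →+* AddMonoidAlgebra (Polynomial ℂ) ℤ).comp (T s)).toAddMonoidHom)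
    (⇑(AddMonoidAlgebra.of (Polynomial ℂ) ℤ)) m p
  have h2 : Φ s (AddMonoidAlgebra.single m p)
      = AddMonoidAlgebra.single (0 : ℤ) (T s p) * AddMonoidAlgebra.single m (1 : Polynomial ℂ) := h
  rw [h2, AddMonoidAlgebra.single_mul_single, zero_add, mul_one]

lemma Φ_eq_mapRange (s : ℂ) (x : FourierPoly) :
    Φ s x = AddMonoidAlgebra.ofCoeff (Finsupp.mapRange (fun p => p.comp (Polynomial.X - Polynomial.C s))
      (by simp) x.coeff) := by
  induction x using AddMonoidAlgebra.induction_linear with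
  | zero => simp
  | add a b ha hb =>
      rw [map_add, ha, hb, AddMonoidAlgebra.coeff_add,
        Finsupp.mapRange_add (fun a b => (Polynomial.add_comp (p := a) (q := b))),
        AddMonoidAlgebra.ofCoeff_add]
  | single m p => rw [Φ_single, AddMonoidAlgebra.coeff_single, Finsupp.mapRange_single, T_apply]; rfl

lemma Φ_apply (s : ℂ) (x : FourierPoly) (m : ℤ) : (Φ s x).coeff m = T s (x.coeff m) := by
  rw [Φ_eq_mapRange, AddMonoidAlgebra.coeff_ofCoeff, Finsupp.mapRange_apply, T_apply]


lemma Φ_single_one (s : ℂ) (a : ℤ) :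
    Φ s (AddMonoidAlgebra.single a (1 : Polynomial ℂ)) = AddMonoidAlgebra.single a 1 := by
  rw [Φ_single, map_one]

lemma modeDeriv_single (m : ℤ) (p : Polynomial ℂ) :
    modeDeriv (AddMonoidAlgebra.single m p)
      = AddMonoidAlgebra.single m
          (derivative p + Polynomial.C (Complex.I * (m : ℂ)) * p) := by
  rw [modeDeriv, AddMonoidAlgebra.coeff_single, Finsupp.sum_single_index]
  simp

lemma modeDeriv_add (x y : FourierPoly) :
    modeDeriv (x + y) = modeDeriv x + modeDeriv y := by
  rw [modeDeriv, modeDeriv, modeDeriv, AddMonoidAlgebra.coeff_add]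
  refine Finsupp.sum_add_index' (fun a => by simp) (fun a b₁ b₂ => ?_)
  rw [← AddMonoidAlgebra.single_add]
  congr 1
  rw [derivative_add]
  ring

lemma modeDeriv_Φ (s : ℂ) (x : FourierPoly) :
    modeDeriv (Φ s x) = Φ s (modeDeriv x) := by
  induction x using AddMonoidAlgebra.induction_linear with
  | zero => simp [modeDeriv]
  | add a b ha hb => rw [map_add, modeDeriv_add, modeDeriv_add, map_add, ha, hb]
  | single m p =>
      rw [Φ_single, modeDeriv_single, modeDeriv_single, Φ_single]
      simp only [T_apply]
      congr 1
      rw [Polynomial.add_comp, Polynomial.mul_comp, Polynomial.C_comp,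
        Polynomial.derivative_comp]
      simp

lemma seriesDeriv_map (s : ℂ) (y : FSeries) :
    seriesDeriv (PowerSeries.map (Φ s) y) = PowerSeries.map (Φ s) (seriesDeriv y) := by
  ext1 k
  rw [PowerSeries.coeff_map, seriesDeriv, seriesDeriv, PowerSeries.coeff_mk,
    PowerSeries.coeff_mk, PowerSeries.coeff_map, modeDeriv_Φ]

lemma seriesDeriv_iter_map (s : ℂ) (l : ℕ) (y : FSeries) :
    seriesDeriv^[l] (PowerSeries.map (Φ s) y) = PowerSeries.map (Φ s) (seriesDeriv^[l] y) := by
  induction l generalizing y with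
  | zero => rfl
  | succ n ih =>
      rw [Function.iterate_succ_apply, Function.iterate_succ_apply, seriesDeriv_map, ih]

lemma map_zUnit (s : ℂ) :
    Units.map (PowerSeries.map (Φ s)).toMonoidHom zUnit = zUnit := by
  apply Units.ext
  rw [Units.coe_map]
  show PowerSeries.map (Φ s) (PowerSeries.C (AddMonoidAlgebra.single 1 1))
    = PowerSeries.C (AddMonoidAlgebra.single 1 1)
  rw [PowerSeries.map_C, Φ_single_one]

lemma map_zUnit_zpow (s : ℂ) (m : ℤ) :
    PowerSeries.map (Φ s) ((zUnit ^ m : FSeriesˣ) : FSeries) = ((zUnit ^ m : FSeriesˣ) : FSeries) := by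
  have h : (PowerSeries.map (Φ s)) ((zUnit ^ m : FSeriesˣ) : FSeries)
      = ((Units.map (PowerSeries.map (Φ s)).toMonoidHom (zUnit ^ m) : FSeriesˣ) : FSeries) := rfl
  rw [h, map_zpow, map_zUnit]

lemma map_zEval (s : ℂ) (x : AddMonoidAlgebra ℂ ℤ) :
    PowerSeries.map (Φ s) (zEval x) = zEval x := by
  induction x using AddMonoidAlgebra.induction_linear with
  | zero => simp
  | add a b ha hb => rw [map_add, map_add, ha, hb]
  | single m c =>
      have h : zEval (AddMonoidAlgebra.single m c)
          = PowerSeries.C (AddMonoidAlgebra.single 0 (Polynomial.C c))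
              * ((zUnit ^ m : FSeriesˣ) : FSeries) :=
        AddMonoidAlgebra.liftNC_single _ _ m c
      rw [h, map_mul, PowerSeries.map_C, map_zUnit_zpow]
      congr 1
      rw [Φ_single, T_apply, Polynomial.C_comp]

lemma hom_fix (s : ℂ) :
    (PowerSeries.map (Φ s)).comp (Polynomial.eval₂RingHom zEval PowerSeries.X)
      = Polynomial.eval₂RingHom zEval PowerSeries.X := by
  apply Polynomial.ringHom_ext
  · intro a
    simp [map_zEval]
  · simp [PowerSeries.map_X]

lemma map_VEval (s : ℂ) {n : ℕ} (V : MvPolynomial (Fin n) (Polynomial (AddMonoidAlgebra ℂ ℤ)))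
    (y : Fin n → FSeries) :
    PowerSeries.map (Φ s) (VEval V y) = VEval V (fun l => PowerSeries.map (Φ s) (y l)) := by
  rw [VEval, VEval, MvPolynomial.eval₂_comp_left (PowerSeries.map (Φ s)), hom_fix]
  rfl

/-- Shift as a linear endomorphism of `ℂ[t]`. -/
def E (s : ℂ) : Module.End ℂ (Polynomial ℂ) :=
  (Polynomial.aeval (Polynomial.X - Polynomial.C s)).toLinearMap

lemma E_apply (s : ℂ) (p : Polynomial ℂ) :
    E s p = p.comp (Polynomial.X - Polynomial.C s) := rfl

lemma shiftedDeriv_comm (s : ℂ) (c : ℂ) : Commute (shiftedDeriv c) (E s) := by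
  apply LinearMap.ext
  intro p
  have h1 : ∀ q : Polynomial ℂ, shiftedDeriv c q = derivative q + c • q := by
    intro q
    simp [shiftedDeriv]
  have key : derivative (E s p) = E s (derivative p) := by
    rw [E_apply, E_apply, Polynomial.derivative_comp]
    simp
  rw [Module.End.mul_apply, Module.End.mul_apply, h1, h1, map_add, map_smul, key]

lemma opProd_comm (s : ℂ) {d : ℕ} (mr : Fin d → ℤ) (nv : Fin d → ℕ) (m : ℤ) :
    Commute (opProd mr nv m) (E s) := by
  rw [opProd]
  apply Commute.list_prod_left
  intro x hx
  rw [List.mem_ofFn] at hx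
  obtain ⟨r, rfl⟩ := hx
  exact (shiftedDeriv_comm s _).pow_left _

lemma opProd_E (s : ℂ) {d : ℕ} (mr : Fin d → ℤ) (nv : Fin d → ℕ) (m : ℤ) (p : Polynomial ℂ) :
    opProd mr nv m (E s p) = E s (opProd mr nv m p) := by
  have := opProd_comm s mr nv m
  rw [Commute, SemiconjBy] at this
  calc opProd mr nv m (E s p) = (opProd mr nv m * E s) p := rfl
    _ = (E s * opProd mr nv m) p := by rw [this]
    _ = E s (opProd mr nv m p) := rfl


end ScalarShiftAux

/-- shift invariance of scalar formal solutions: if `{f_{m,k}}` is a scalar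
formal solution of `Π_r (d/dt - i m_r)^{n_r} y = ε V(ε,e^{±it},y,…,y^{(N-1)})` and `s ∈ ℂ`,
then the shifted family `g_{m,k}(t) := f_{m,k}(t - s)` (the exponentials `e^{imt}` are NOT
shifted) is again a scalar formal solution of the same equation. -/
theorem scalar_shift {d : ℕ} (hd : 0 < d) (mr : Fin d → ℤ)
    (hmr : Function.Injective mr) (nv : Fin d → ℕ) (hnv : ∀ r, 0 < nv r)
    (V : MvPolynomial (Fin (∑ r, nv r)) (Polynomial (AddMonoidAlgebra ℂ ℤ)))
    (F : ℕ → FourierPoly)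
    (hsol : IsScalarFormalSolution mr nv V F) (s : ℂ) :
    IsScalarFormalSolution mr nv V
      (fun k => AddMonoidAlgebra.ofCoeff (Finsupp.mapRange (fun p => p.comp (Polynomial.X - Polynomial.C s))
        (by simp) (F k).coeff)) := by
  intro k m
  have hmap : ((PowerSeries.mk fun k' =>
      AddMonoidAlgebra.ofCoeff (Finsupp.mapRange (fun p => p.comp (Polynomial.X - Polynomial.C s))
        (by simp) (F k').coeff)) : FSeries)
      = PowerSeries.map (ScalarShiftAux.Φ s) (PowerSeries.mk fun k' => F k') := by
    apply PowerSeries.ext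
    intro k'
    rw [PowerSeries.coeff_mk, PowerSeries.coeff_map, PowerSeries.coeff_mk,
      ScalarShiftAux.Φ_eq_mapRange]
  have hL : (AddMonoidAlgebra.ofCoeff (Finsupp.mapRange (fun p => p.comp (Polynomial.X - Polynomial.C s))
      (by simp) (F k).coeff)).coeff m = ScalarShiftAux.E s ((F k).coeff m) := by
    rw [AddMonoidAlgebra.coeff_ofCoeff, Finsupp.mapRange_apply]; rfl
  rw [hL, ScalarShiftAux.opProd_E, hsol k m, hmap]
  have hiter : ∀ l : Fin (∑ r, nv r), seriesDeriv^[(l : ℕ)]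
      (PowerSeries.map (ScalarShiftAux.Φ s) (PowerSeries.mk fun k' => F k'))
      = PowerSeries.map (ScalarShiftAux.Φ s)
          (seriesDeriv^[(l : ℕ)] (PowerSeries.mk fun k' => F k')) :=
    fun l => ScalarShiftAux.seriesDeriv_iter_map s _ _
  rw [funext hiter, ← ScalarShiftAux.map_VEval]
  have hX : PowerSeries.X * PowerSeries.map (ScalarShiftAux.Φ s)
      (VEval V (fun l => seriesDeriv^[(l : ℕ)] (PowerSeries.mk fun k' => F k')))
      = PowerSeries.map (ScalarShiftAux.Φ s) (PowerSeries.X *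
        VEval V (fun l => seriesDeriv^[(l : ℕ)] (PowerSeries.mk fun k' => F k'))) := by
    rw [map_mul, PowerSeries.map_X]
  rw [hX, PowerSeries.coeff_map, ScalarShiftAux.Φ_apply]
  rfl


end
end
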